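/- arXiv:2404.14650 — 3 statements merged into one kernel-verified Lean document; each statement's English description precedes it below -/
import Mathlib

section
/- The map g ↦ [g] from G to K_par G is a partial representation, and for every partial representation π of G in a unital K-algebra A there exists a unique K-algebra homomorphism φ: K_par G → A with π(g) = φ([g]) for all g ∈ G. -/
/-- The defining relations of Exel's semigroup `S(G)` of a group `G`:
`[1] = 1`, `[s⁻¹][s][t] = [s⁻¹][st]`, `[s][t][t⁻¹] = [st][t⁻¹]`. -/
inductive ExelRel (G : Type*) [Group G] : FreeMonoid G → FreeMonoid G → Prop
  | one : ExelRel G (FreeMonoid.of 1) 1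
  | left (s t : G) : ExelRel G
      (FreeMonoid.of s⁻¹ * FreeMonoid.of s * FreeMonoid.of t)
      (FreeMonoid.of s⁻¹ * FreeMonoid.of (s * t))
  | right (s t : G) : ExelRel G
      (FreeMonoid.of s * FreeMonoid.of t * FreeMonoid.of t⁻¹)
      (FreeMonoid.of (s * t) * FreeMonoid.of t⁻¹)

/-- The congruence on the free monoid on `G` generated by the Exel relations. -/
def ExelCon (G : Type*) [Group G] : Con (FreeMonoid G) := conGen (ExelRel G)

/-- Exel's semigroup (an inverse monoid) `S(G)` of the group `G`. -/
abbrev ExelMonoid (G : Type*) [Group G] := (ExelCon G).Quotient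

/-- The canonical generator `[g]` of `S(G)`. -/
def ExelMonoid.of {G : Type*} [Group G] (g : G) : ExelMonoid G :=
  (ExelCon G).mk' (FreeMonoid.of g)

/-- The idempotent `e_g := [g][g⁻¹]` in `S(G)`. -/
def ExelMonoid.e {G : Type*} [Group G] (g : G) : ExelMonoid G :=
  ExelMonoid.of g * ExelMonoid.of g⁻¹

/-- The partial group algebra `K_par G`: the semigroup `K`-algebra of Exel's semigroup. -/
abbrev KparG (K G : Type*) [CommRing K] [Group G] := MonoidAlgebra K (ExelMonoid G)

/-- The canonical generator `[g]` of `K_par G`. -/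
noncomputable def pr (K : Type*) {G : Type*} [CommRing K] [Group G] (g : G) : KparG K G :=
  MonoidAlgebra.of K (ExelMonoid G) (ExelMonoid.of g)

/-- The idempotent `e_g := [g][g⁻¹]` in `K_par G`. -/
noncomputable def eK (K : Type*) {G : Type*} [CommRing K] [Group G] (g : G) : KparG K G :=
  pr K g * pr K g⁻¹

/-- A partial representation of `G` in a unital `K`-algebra (or any monoid) `A`:
`π(1) = 1`, `π(s)π(t)π(t⁻¹) = π(st)π(t⁻¹)`, `π(s⁻¹)π(s)π(t) = π(s⁻¹)π(st)`. -/
def IsPartialRep {G A : Type*} [Group G] [Monoid A] (π : G → A) : Prop :=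
  π 1 = 1 ∧ (∀ s t : G, π s * π t * π t⁻¹ = π (s * t) * π t⁻¹) ∧
    (∀ s t : G, π s⁻¹ * π s * π t = π s⁻¹ * π (s * t))

section aux
variable {K G : Type*} [CommRing K] [Group G]

lemma exel_rel {x y : FreeMonoid G} (h : ExelRel G x y) :
    (ExelCon G).mk' x = (ExelCon G).mk' y :=
  (Con.eq _).2 (ConGen.Rel.of _ _ h)

lemma exel_one : ExelMonoid.of (1 : G) = 1 := exel_rel ExelRel.one

lemma exel_pr : IsPartialRep (fun g : G => pr K g) := by
  refine ⟨?_, fun s t => ?_, fun s t => ?_⟩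
  · show MonoidAlgebra.of K (ExelMonoid G) (ExelMonoid.of (1:G)) = 1
    rw [exel_one, map_one]
  · simp only [pr, ← map_mul]
    congr 1
    simpa [ExelMonoid.of, map_mul] using exel_rel (ExelRel.right s t)
  · simp only [pr, ← map_mul]
    congr 1
    simpa [ExelMonoid.of, map_mul] using exel_rel (ExelRel.left s t)
end aux


/-- The map `g ↦ [g]` is a partial representation of `G` in `K_par G` (the universal one),
and for every partial representation `π` of `G` in a unital `K`-algebra `A` there is a
unique `K`-algebra homomorphism `φ : K_par G → A` with `π(g) = φ([g])` for all `g`. -/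
theorem kpar_universal_property (K G : Type*) [CommRing K] [Group G] :
    IsPartialRep (fun g : G => pr K g) ∧
      ∀ (A : Type*) [Ring A] [Algebra K A] (π : G → A), IsPartialRep π →
        ∃! φ : KparG K G →ₐ[K] A, ∀ g : G, φ (pr K g) = π g := by
  refine ⟨exel_pr, fun A _ _ π hπ => ?_⟩
  obtain ⟨h1, hr, hl⟩ := hπ
  set f : FreeMonoid G →* A := FreeMonoid.lift π with hf
  have hle : ExelCon G ≤ Con.ker f := by
    apply Con.conGen_le.2
    intro x y h
    cases h with
    | one => show f _ = f _; simp [hf, h1]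
    | left s t => show f _ = f _; simp [hf, hl s t]
    | right s t => show f _ = f _; simp [hf, hr s t]
  set φ₀ : ExelMonoid G →* A := (ExelCon G).lift f hle with hφ₀
  have hφ₀of : ∀ g : G, φ₀ (ExelMonoid.of g) = π g := by
    intro g
    simp [hφ₀, ExelMonoid.of, hf]
  refine ⟨MonoidAlgebra.lift K A (ExelMonoid G) φ₀, fun g => ?_, fun ψ hψ => ?_⟩
  · simp [pr, hφ₀of]
  · apply MonoidAlgebra.algHom_ext
    intro m
    induction m using Con.induction_on with
    | H x =>
      induction x using FreeMonoid.recOn with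
      | one =>
        have h : ((1 : FreeMonoid G) : ExelMonoid G) = 1 := rfl
        rw [h, ← MonoidAlgebra.one_def, map_one, map_one]
      | of_mul g xs ih =>
        have hc : ((FreeMonoid.of g * xs : FreeMonoid G) : ExelMonoid G) =
            ExelMonoid.of g * (xs : ExelMonoid G) := rfl
        have : (MonoidAlgebra.single ((FreeMonoid.of g * xs : FreeMonoid G) : ExelMonoid G) (1:K)) =
            pr K g * MonoidAlgebra.single (xs : ExelMonoid G) 1 := by
          rw [hc, pr]
          simp [MonoidAlgebra.single_mul_single, MonoidAlgebra.of_apply]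
        rw [this, map_mul, map_mul, ih, hψ g]
        congr 1
        simp [pr, hφ₀of]
    exact Subsingleton.elim _ _
end

section
/- The globalization functor Λ = KG ⊗_{G_par} −: K_par G-Mod → KG-Mod is exact; in particular it sends injective K_par G-module maps to injective KG-module maps. -/
open TensorProduct

/-- The group algebra `KG`. -/
abbrev KG (K G : Type*) [CommRing K] [Group G] := MonoidAlgebra K G

/-- The relation `KG`-submodule of `KG ⊗[K] M` defining `KG ⊗_{G_par} M` for a left
`K_par G`-module `M` with its induced partial action:
generated by the elements `g ⊗ [h]·m − gh ⊗ e_{h⁻¹}·m`. -/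
noncomputable def glueRel (K G M : Type*) [CommRing K] [Group G]
    [AddCommGroup M] [Module K M] [Module (KparG K G) M] [IsScalarTower K (KparG K G) M] :
    Submodule (KG K G) (KG K G ⊗[K] M) :=
  Submodule.span (KG K G) {w : KG K G ⊗[K] M | ∃ (g h : G) (m : M),
    w = MonoidAlgebra.of K G g ⊗ₜ[K] (pr K h • m) -
      MonoidAlgebra.of K G (g * h) ⊗ₜ[K] (eK K h⁻¹ • m)}

/-- The universal globalization `Λ(M) = KG ⊗_{G_par} M` of a left `K_par G`-module `M`. -/
noncomputable abbrev Glob (K G M : Type*) [CommRing K] [Group G]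
    [AddCommGroup M] [Module K M] [Module (KparG K G) M] [IsScalarTower K (KparG K G) M] :=
  KG K G ⊗[K] M ⧸ glueRel K G M


-- ===================== auxiliary lemmas =====================

namespace ExelMonoid
variable {G : Type*} [Group G]

lemma of_one : (ExelMonoid.of (1:G)) = 1 := by
  have : (ExelCon G) (FreeMonoid.of 1) 1 := ConGen.Rel.of _ _ ExelRel.one
  simpa [ExelMonoid.of, Con.mk'] using (Con.eq _).mpr this

lemma rel_left (s t : G) : of s⁻¹ * of s * of t = of s⁻¹ * of (s * t) := by
  have : (ExelCon G) (FreeMonoid.of s⁻¹ * FreeMonoid.of s * FreeMonoid.of t)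
      (FreeMonoid.of s⁻¹ * FreeMonoid.of (s * t)) := ConGen.Rel.of _ _ (ExelRel.left s t)
  simpa [ExelMonoid.of, Con.mk'] using (Con.eq _).mpr this

lemma rel_right (s t : G) : of s * of t * of t⁻¹ = of (s * t) * of t⁻¹ := by
  have : (ExelCon G) (FreeMonoid.of s * FreeMonoid.of t * FreeMonoid.of t⁻¹)
      (FreeMonoid.of (s * t) * FreeMonoid.of t⁻¹) := ConGen.Rel.of _ _ (ExelRel.right s t)
  simpa [ExelMonoid.of, Con.mk'] using (Con.eq _).mpr this

lemma tri (t : G) : of t * of t⁻¹ * of t = of t := by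
  have h := rel_left t⁻¹ t
  rw [inv_inv] at h
  rw [h, inv_mul_cancel, of_one, mul_one]

lemma magic (s t : G) : of s * of t = of (s * t) * of t⁻¹ * of t := by
  have h := rel_right s t
  calc of s * of t = of s * (of t * of t⁻¹ * of t) := by rw [tri]
    _ = of s * of t * of t⁻¹ * of t := by noncomm_ring
    _ = of (s * t) * of t⁻¹ * of t := by rw [h]

end ExelMonoid

namespace GlobAux
variable (K : Type*) {G : Type*} [CommRing K] [Group G]

lemma pr_one : pr K (1:G) = 1 := by
  rw [pr, ExelMonoid.of_one]; exact map_one _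

lemma pr_magic (s t : G) : pr K s * pr K t = pr K (s*t) * eK K t⁻¹ := by
  simp only [eK, inv_inv, pr, ← map_mul, mul_assoc]
  rw [← mul_assoc (ExelMonoid.of (s*t)), ← ExelMonoid.magic]

variable {M : Type*} [AddCommGroup M] [Module K M] [Module (KparG K G) M]
  [IsScalarTower K (KparG K G) M]

lemma key_smul (s t : G) (m : M) :
    pr K s • (pr K t • m) = pr K (s * t) • (eK K t⁻¹ • m) := by
  rw [← mul_smul, ← mul_smul, pr_magic]

/-- `T k : KG → KparG`, `g ↦ [k⁻¹ g]`, `K`-linear. -/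
noncomputable def T (k : G) : KG K G →ₗ[K] KparG K G :=
  MonoidAlgebra.mapDomainLinearMap K K (fun g => ExelMonoid.of (k⁻¹ * g))

lemma T_single (k g : G) (r : K) :
    T K k (MonoidAlgebra.single g r) = MonoidAlgebra.single (ExelMonoid.of (k⁻¹*g)) r := by
  simp only [T]
  exact MonoidAlgebra.mapDomainLinearMap_single _ _ _

lemma T_of (k g : G) : T K k (MonoidAlgebra.of K G g) = pr K (k⁻¹ * g) := by
  rw [MonoidAlgebra.of_apply, T_single]; rfl

/-- the coefficient map `c k : KG ⊗ M → M`. -/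
noncomputable def c (k : G) : (KG K G ⊗[K] M) →ₗ[K] M :=
  TensorProduct.lift (LinearMap.mk₂ K (fun a m => (T K k a) • m)
    (fun a b m => by simp [add_smul])
    (fun r a m => by simp [smul_assoc])
    (fun a m n => by simp [smul_add])
    (fun r a m => (smul_comm r _ m).symm))

@[simp] lemma c_tmul (k : G) (a : KG K G) (m : M) : c K k (a ⊗ₜ[K] m) = (T K k a) • m := by
  simp [c, TensorProduct.lift.tmul]

lemma c_of_tmul (k g : G) (m : M) :
    c K k ((MonoidAlgebra.of K G g) ⊗ₜ[K] m) = pr K (k⁻¹*g) • m := by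
  rw [c_tmul, T_of]

lemma T_single_mul (k g : G) (r : K) (a : KG K G) :
    T K k ((MonoidAlgebra.single g r : KG K G) * a) = r • T K (g⁻¹ * k) a := by
  induction a using MonoidAlgebra.induction_linear with
  | zero => simp
  | add a b ha hb => rw [mul_add, map_add, map_add, ha, hb, smul_add]
  | single g' r' =>
      rw [
        MonoidAlgebra.single_mul_single, T_single, T_single,
        show (g⁻¹ * k)⁻¹ * g' = k⁻¹ * (g * g') by group]
      rw [MonoidAlgebra.smul_single']

lemma c_single_smul (k g : G) (r : K) (w : KG K G ⊗[K] M) :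
    c K k ((MonoidAlgebra.single g r : KG K G) • w) = r • c K (g⁻¹ * k) w := by
  induction w with
  | zero => simp
  | add x y hx hy => rw [smul_add, map_add, map_add, hx, hy, smul_add]
  | tmul a m =>
      rw [TensorProduct.smul_tmul', c_tmul, c_tmul, smul_eq_mul, T_single_mul, smul_assoc]

lemma glueRel_le_ker (w : KG K G ⊗[K] M) (hw : w ∈ glueRel K G M) : ∀ (k : G),
    c K k w = 0 := by
  induction hw using Submodule.span_induction with
  | mem x hx =>
      intro k
      obtain ⟨g, h, m, rfl⟩ := hx
      rw [map_sub, c_of_tmul, c_of_tmul, ← mul_assoc, key_smul, sub_self]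
  | zero => simp
  | add x y _ _ hx hy => intro k; rw [map_add, hx, hy, add_zero]
  | smul b x _ hx =>
      induction b using MonoidAlgebra.induction_linear with
      | zero => intro k; rw [zero_smul, map_zero]
      | add b b' hb hb' => intro k; rw [add_smul, map_add, hb k, hb' k, add_zero]
      | single g r => intro k; rw [c_single_smul, hx, smul_zero]

lemma c_sum (k : G) (s : Finset G) (m : G → M) :
    c K k (∑ g ∈ s, MonoidAlgebra.of K G g ⊗ₜ[K] m g) = ∑ g ∈ s, pr K (k⁻¹*g) • m g := by
  rw [map_sum]; exact Finset.sum_congr rfl fun g _ => c_of_tmul K k g (m g)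

lemma exists_rep (w : KG K G ⊗[K] M) :
    ∃ (s : Finset G) (m : G → M), w = ∑ g ∈ s, MonoidAlgebra.of K G g ⊗ₜ[K] m g := by
  classical
  induction w with
  | zero => exact ⟨∅, fun _ => 0, by simp⟩
  | tmul a x =>
      refine ⟨a.coeff.support, fun g => a.coeff g • x, ?_⟩
      conv_lhs => rw [← MonoidAlgebra.sum_coeff_single a]
      rw [Finsupp.sum, TensorProduct.sum_tmul]
      refine Finset.sum_congr rfl fun g _ => ?_
      rw [show (MonoidAlgebra.single g (a.coeff g) : KG K G) = a.coeff g • MonoidAlgebra.of K G g by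
            rw [MonoidAlgebra.of_apply, MonoidAlgebra.smul_single', mul_one],
          TensorProduct.smul_tmul]
  | add x y hx hy =>
      obtain ⟨s₁, m₁, rfl⟩ := hx
      obtain ⟨s₂, m₂, rfl⟩ := hy
      refine ⟨s₁ ∪ s₂, fun g => (if g ∈ s₁ then m₁ g else 0) + (if g ∈ s₂ then m₂ g else 0), ?_⟩
      have e1 : ∑ g ∈ s₁ ∪ s₂, (MonoidAlgebra.of K G g ⊗ₜ[K] (if g ∈ s₁ then m₁ g else 0))
          = ∑ g ∈ s₁, MonoidAlgebra.of K G g ⊗ₜ[K] m₁ g := by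
        rw [← Finset.sum_subset Finset.subset_union_left
          (fun g _ hg => by rw [if_neg hg, TensorProduct.tmul_zero])]
        exact Finset.sum_congr rfl fun g hg => by rw [if_pos hg]
      have e2 : ∑ g ∈ s₁ ∪ s₂, (MonoidAlgebra.of K G g ⊗ₜ[K] (if g ∈ s₂ then m₂ g else 0))
          = ∑ g ∈ s₂, MonoidAlgebra.of K G g ⊗ₜ[K] m₂ g := by
        rw [← Finset.sum_subset Finset.subset_union_right
          (fun g _ hg => by rw [if_neg hg, TensorProduct.tmul_zero])]
        exact Finset.sum_congr rfl fun g hg => by rw [if_pos hg]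
      simp only [TensorProduct.tmul_add, Finset.sum_add_distrib, e1, e2]

lemma star_aux : ∀ (n : ℕ) (s : Finset G) (m : G → M), s.card ≤ n →
    (∀ k, c K k (∑ g ∈ s, MonoidAlgebra.of K G g ⊗ₜ[K] m g) = 0) →
    (∑ g ∈ s, MonoidAlgebra.of K G g ⊗ₜ[K] m g) ∈ glueRel K G M := by
  classical
  intro n
  induction n with
  | zero =>
      intro s m hcard _
      rw [Finset.card_eq_zero.mp (Nat.le_zero.mp hcard)]
      simp only [Finset.sum_empty]
      exact zero_mem _
  | succ n ih =>
      intro s m hcard hker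
      rcases s.eq_empty_or_nonempty with rfl | ⟨g₀, hg₀⟩
      · simp only [Finset.sum_empty]; exact zero_mem _
      set t := s.erase g₀ with ht
      set r : KG K G ⊗[K] M := ∑ g ∈ t, (MonoidAlgebra.of K G g₀ ⊗ₜ[K] (pr K (g₀⁻¹*g) • m g)
          - MonoidAlgebra.of K G g ⊗ₜ[K] (eK K (g⁻¹*g₀) • m g)) with hr
      have hrmem : r ∈ glueRel K G M := by
        refine Submodule.sum_mem _ fun g _ => Submodule.subset_span ?_
        refine ⟨g₀, g₀⁻¹*g, m g, ?_⟩
        rw [mul_inv_cancel_left, mul_inv_rev, inv_inv]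
      have h0 : m g₀ = - ∑ g ∈ t, pr K (g₀⁻¹*g) • m g := by
        have := hker g₀
        rw [c_sum, ← Finset.add_sum_erase s _ hg₀, inv_mul_cancel, pr_one, one_smul] at this
        exact eq_neg_of_add_eq_zero_left this
      set m' : G → M := fun g => m g - eK K (g⁻¹*g₀) • m g with hm'
      set w' : KG K G ⊗[K] M := ∑ g ∈ t, MonoidAlgebra.of K G g ⊗ₜ[K] m' g with hw'
      have hkey : (∑ g ∈ s, MonoidAlgebra.of K G g ⊗ₜ[K] m g) = w' - r := by
        rw [← Finset.add_sum_erase s _ hg₀, h0, TensorProduct.tmul_neg, TensorProduct.tmul_sum,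
          hw', hr, ← ht, ← Finset.sum_sub_distrib, ← Finset.sum_neg_distrib,
          ← Finset.sum_add_distrib]
        refine Finset.sum_congr rfl fun g _ => ?_
        simp only [hm', TensorProduct.tmul_sub]
        abel
      have hw'ker : ∀ k, c K k w' = 0 := by
        intro k
        have : c K k (∑ g ∈ s, MonoidAlgebra.of K G g ⊗ₜ[K] m g) = c K k w' - c K k r := by
          rw [hkey, map_sub]
        rw [hker k, glueRel_le_ker K r hrmem k, sub_zero] at this
        exact this.symm
      have hw'mem : w' ∈ glueRel K G M := by
        refine ih t m' ?_ hw'ker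
        rw [ht, Finset.card_erase_of_mem hg₀]
        omega
      rw [hkey]
      exact Submodule.sub_mem _ hw'mem hrmem

theorem ker_le_glueRel (w : KG K G ⊗[K] M) (hw : ∀ k, c K k w = 0) : w ∈ glueRel K G M := by
  obtain ⟨s, m, rfl⟩ := exists_rep K w
  exact star_aux K s.card s m le_rfl hw

section maps
variable {K}
variable {X Y : Type*} [AddCommGroup X] [Module K X] [Module (KparG K G) X]
  [IsScalarTower K (KparG K G) X] [AddCommGroup Y] [Module K Y] [Module (KparG K G) Y]
  [IsScalarTower K (KparG K G) Y]

/-- a `K_par G`-linear map viewed as `K`-linear. -/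
noncomputable def toKlin (ψ : X →ₗ[KparG K G] Y) : X →ₗ[K] Y where
  toFun := ψ
  map_add' := ψ.map_add
  map_smul' := fun k x => by
    simp only [RingHom.id_apply]
    rw [← algebraMap_smul (KparG K G) k x, ψ.map_smul, algebraMap_smul]

@[simp] lemma toKlin_apply (ψ : X →ₗ[KparG K G] Y) (x : X) : toKlin ψ x = ψ x := rfl

/-- the induced `KG`-linear map on `KG ⊗[K] -`. -/
noncomputable def Fmap (ψ : X →ₗ[KparG K G] Y) : KG K G ⊗[K] X →ₗ[KG K G] KG K G ⊗[K] Y :=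
  TensorProduct.AlgebraTensorModule.map (LinearMap.id : KG K G →ₗ[KG K G] KG K G) (toKlin ψ)

@[simp] lemma Fmap_tmul (ψ : X →ₗ[KparG K G] Y) (a : KG K G) (x : X) :
    Fmap ψ (a ⊗ₜ[K] x) = a ⊗ₜ[K] ψ x := by
  simp [Fmap]

lemma c_nat (ψ : X →ₗ[KparG K G] Y) (k : G) (w : KG K G ⊗[K] X) :
    c K k (Fmap ψ w) = ψ (c K k w) := by
  induction w with
  | zero => simp
  | add x y hx hy => rw [map_add, map_add, map_add, hx, hy, map_add]
  | tmul a x => rw [Fmap_tmul, c_tmul, c_tmul, map_smul]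

lemma Fmap_glue (ψ : X →ₗ[KparG K G] Y) :
    glueRel K G X ≤ Submodule.comap (Fmap ψ) (glueRel K G Y) := by
  rw [glueRel, Submodule.span_le]
  rintro w ⟨g, h, m, rfl⟩
  simp only [SetLike.mem_coe, Submodule.mem_comap, map_sub, Fmap_tmul, map_smul]
  exact Submodule.subset_span ⟨g, h, ψ m, rfl⟩

/-- agreement: any map with the defining property is induced by `Fmap`. -/
lemma agree (ψ : X →ₗ[KparG K G] Y) (ψ' : Glob K G X →ₗ[KG K G] Glob K G Y)
    (hψ : ∀ (a : KG K G) (x : X), ψ' (Submodule.Quotient.mk (a ⊗ₜ[K] x)) =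
      Submodule.Quotient.mk (a ⊗ₜ[K] ψ x)) (w : KG K G ⊗[K] X) :
    ψ' (Submodule.Quotient.mk w) = Submodule.Quotient.mk (Fmap ψ w) := by
  induction w with
  | zero => simp
  | add x y hx hy =>
      rw [Submodule.Quotient.mk_add, map_add, hx, hy, map_add, Submodule.Quotient.mk_add]
  | tmul a x => rw [hψ, Fmap_tmul]

lemma Fmap_eq_lTensor (φ : X →ₗ[KparG K G] Y) (u : KG K G ⊗[K] X) :
    Fmap φ u = LinearMap.lTensor (KG K G) (toKlin φ) u := by
  induction u with
  | zero => simp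
  | add x y hx hy => rw [map_add, map_add, hx, hy]
  | tmul a x => rw [Fmap_tmul, LinearMap.lTensor_tmul]; rfl

set_option maxHeartbeats 400000 in
lemma sub_range_step (p : Submodule (KparG K G) Y) (w : KG K G ⊗[K] Y)
    (hck : ∀ k, c K k w ∈ p) :
    ∃ r ∈ glueRel K G Y, ∃ u₀ : KG K G ⊗[K] ↥p,
      w - r = LinearMap.lTensor (KG K G) (toKlin (X := ↥p) p.subtype) u₀ := by
  have hexK : Function.Exact (toKlin (X := ↥p) p.subtype) (toKlin p.mkQ) := by
    intro y
    show p.mkQ y = 0 ↔ y ∈ Set.range (toKlin (X := ↥p) p.subtype)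
    constructor
    · intro h
      exact ⟨⟨y, (Submodule.Quotient.mk_eq_zero p).mp h⟩, rfl⟩
    · rintro ⟨u, rfl⟩
      show p.mkQ u.val = 0
      exact (Submodule.Quotient.mk_eq_zero p).mpr u.2
  have hsurj : Function.Surjective (toKlin p.mkQ) := by
    intro q
    obtain ⟨y, hy⟩ := Submodule.Quotient.mk_surjective p q
    exact ⟨y, hy⟩
  have hπw : Fmap p.mkQ w ∈ glueRel K G (Y ⧸ p) := by
    refine ker_le_glueRel K _ fun k => ?_
    rw [c_nat p.mkQ k w]
    exact (Submodule.Quotient.mk_eq_zero p).mpr (hck k)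
  have himg : glueRel K G (Y ⧸ p) = Submodule.map (Fmap p.mkQ) (glueRel K G Y) := by
    rw [glueRel, glueRel, Submodule.map_span]
    congr 1
    apply le_antisymm
    · rintro w' ⟨gg, h, q, rfl⟩
      obtain ⟨y, rfl⟩ := Submodule.Quotient.mk_surjective p q
      exact ⟨MonoidAlgebra.of K G gg ⊗ₜ[K] (pr K h • y) -
        MonoidAlgebra.of K G (gg * h) ⊗ₜ[K] (eK K h⁻¹ • y),
        ⟨gg, h, y, rfl⟩, by simp only [map_sub, Fmap_tmul, map_smul]; rfl⟩
    · rintro w' ⟨w'', ⟨gg, h, y, rfl⟩, rfl⟩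
      exact ⟨gg, h, p.mkQ y, by simp only [map_sub, Fmap_tmul, map_smul]⟩
  rw [himg] at hπw
  obtain ⟨r, hrmem, hr⟩ := hπw
  refine ⟨r, hrmem, ?_⟩
  have hexT := lTensor_exact (KG K G) hexK hsurj
  have hker0 : LinearMap.lTensor (KG K G) (toKlin p.mkQ) (w - r) = 0 := by
    rw [← Fmap_eq_lTensor p.mkQ (w - r), map_sub, hr, sub_self]
  obtain ⟨u₀, hu₀⟩ := (hexT (w - r)).mp hker0
  exact ⟨u₀, hu₀.symm⟩

end maps
end GlobAux

open GlobAux in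
set_option maxHeartbeats 1000000 in
/-- The globalization functor `Λ = KG ⊗_{G_par} − : K_par G-Mod → KG-Mod` is exact:
every `K_par G`-module map `ψ : X → Y` induces a `KG`-module map
`ψ_* : Λ(X) → Λ(Y)`, `a ⊗ x ↦ a ⊗ ψ(x)`; `Λ` sends exact pairs to exact pairs, and in
particular it sends injective `K_par G`-module maps to injective `KG`-module maps. -/
theorem glob_functor_exact (K G : Type*) [CommRing K] [Group G]
    (X Y Z : Type*) [AddCommGroup X] [Module K X] [Module (KparG K G) X]
    [IsScalarTower K (KparG K G) X] [AddCommGroup Y] [Module K Y] [Module (KparG K G) Y]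
    [IsScalarTower K (KparG K G) Y] [AddCommGroup Z] [Module K Z] [Module (KparG K G) Z]
    [IsScalarTower K (KparG K G) Z] :
    (∀ ψ : X →ₗ[KparG K G] Y, ∃ ψ' : Glob K G X →ₗ[KG K G] Glob K G Y,
      ∀ (a : KG K G) (x : X), ψ' (Submodule.Quotient.mk (a ⊗ₜ[K] x)) =
        Submodule.Quotient.mk (a ⊗ₜ[K] ψ x)) ∧
    (∀ (ψ : X →ₗ[KparG K G] Y) (ψ' : Glob K G X →ₗ[KG K G] Glob K G Y),
      (∀ (a : KG K G) (x : X), ψ' (Submodule.Quotient.mk (a ⊗ₜ[K] x)) =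
        Submodule.Quotient.mk (a ⊗ₜ[K] ψ x)) →
      Function.Injective ψ → Function.Injective ψ') ∧
    (∀ (f : X →ₗ[KparG K G] Y) (g : Y →ₗ[KparG K G] Z)
      (f' : Glob K G X →ₗ[KG K G] Glob K G Y) (g' : Glob K G Y →ₗ[KG K G] Glob K G Z),
      (∀ (a : KG K G) (x : X), f' (Submodule.Quotient.mk (a ⊗ₜ[K] x)) =
        Submodule.Quotient.mk (a ⊗ₜ[K] f x)) →
      (∀ (a : KG K G) (y : Y), g' (Submodule.Quotient.mk (a ⊗ₜ[K] y)) =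
        Submodule.Quotient.mk (a ⊗ₜ[K] g y)) →
      Function.Exact f g → Function.Exact f' g') := by
  refine ⟨?_, ?_, ?_⟩
  · -- part 1: existence of the induced map
    intro ψ
    refine ⟨Submodule.mapQ _ _ (Fmap ψ) (Fmap_glue ψ), fun a x => ?_⟩
    rw [Submodule.mapQ_apply, Fmap_tmul]
  · -- part 2: injectivity
    intro ψ ψ' hψ hinj
    rw [injective_iff_map_eq_zero]
    intro v hv
    obtain ⟨w, rfl⟩ := Submodule.Quotient.mk_surjective _ v
    rw [agree ψ ψ' hψ w, Submodule.Quotient.mk_eq_zero] at hv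
    rw [Submodule.Quotient.mk_eq_zero]
    refine ker_le_glueRel K w fun k => hinj ?_
    rw [map_zero, ← c_nat ψ k w]
    exact glueRel_le_ker K _ hv k
  · -- part 3: exactness
    intro f g f' g' hf hg hfg v
    constructor
    · intro hv
      obtain ⟨w, rfl⟩ := Submodule.Quotient.mk_surjective _ v
      rw [agree g g' hg w, Submodule.Quotient.mk_eq_zero] at hv
      have hck : ∀ k : G, c K k w ∈ LinearMap.range f := by
        intro k
        have h1 : g (c K k w) = 0 := by
          rw [← c_nat g k w]; exact glueRel_le_ker K _ hv k
        exact LinearMap.mem_range.mpr ((hfg (c K k w)).mp h1)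
      obtain ⟨r, hrmem, u₀, hu₀⟩ := sub_range_step (LinearMap.range f) w hck
      have hsur : Function.Surjective
          (toKlin (f.rangeRestrict : X →ₗ[KparG K G] ↥(LinearMap.range f))) := by
        intro y
        obtain ⟨x, hx⟩ := f.surjective_rangeRestrict y
        exact ⟨x, hx⟩
      obtain ⟨u₁, hu₁⟩ := LinearMap.lTensor_surjective (KG K G) hsur u₀
      have hcomp : toKlin f = (toKlin (X := ↥(LinearMap.range f))
          (LinearMap.range f).subtype).comp (toKlin f.rangeRestrict) :=
        LinearMap.ext fun x => rfl
      have hfw : Fmap f u₁ = w - r := by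
        rw [Fmap_eq_lTensor f u₁, hcomp, LinearMap.lTensor_comp_apply, hu₁, ← hu₀]
      refine ⟨Submodule.Quotient.mk u₁, ?_⟩
      rw [agree f f' hf u₁, hfw, Submodule.Quotient.mk_sub,
        (Submodule.Quotient.mk_eq_zero _).mpr hrmem, sub_zero]
    · rintro ⟨x, rfl⟩
      obtain ⟨u, rfl⟩ := Submodule.Quotient.mk_surjective _ x
      rw [agree f f' hf u, agree g g' hg (Fmap f u), Submodule.Quotient.mk_eq_zero]
      have h0 : Fmap g (Fmap f u) = 0 := by
        induction u with
        | zero => simp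
        | add a b ha hb => rw [map_add, map_add, ha, hb, add_zero]
        | tmul a x => rw [Fmap_tmul, Fmap_tmul, hfg.apply_apply_eq_zero, TensorProduct.tmul_zero]
      rw [h0]
      exact zero_mem _
end

section
/- Let G be an infinite group and z ∈ K_par G. If there exists an infinite subset S ⊆ G with z e_g = 0 for all g ∈ S, then z = 0. -/
namespace ExelAux

variable {G : Type*} [Group G]

lemma mk_rel {x y : FreeMonoid G} (h : ExelRel G x y) :
    (ExelCon G).mk' x = (ExelCon G).mk' y :=
  (Con.eq _).mpr (ConGen.Rel.of _ _ h)

lemma of_one : ExelMonoid.of (1:G) = 1 := by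
  simpa [ExelMonoid.of] using mk_rel (G := G) ExelRel.one

lemma rel_left (s t : G) :
    ExelMonoid.of s⁻¹ * ExelMonoid.of s * ExelMonoid.of t
      = ExelMonoid.of s⁻¹ * ExelMonoid.of (s*t) := by
  have := mk_rel (G := G) (ExelRel.left s t)
  simpa [ExelMonoid.of, map_mul] using this

lemma rel_right (s t : G) :
    ExelMonoid.of s * ExelMonoid.of t * ExelMonoid.of t⁻¹
      = ExelMonoid.of (s*t) * ExelMonoid.of t⁻¹ := by
  have := mk_rel (G := G) (ExelRel.right s t)
  simpa [ExelMonoid.of, map_mul] using this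

open ExelMonoid

lemma of_mul_of (a b : G) : of a * of b = e a * of (a*b) := by
  have := rel_left (G := G) a⁻¹ (a*b)
  simp only [inv_inv, inv_mul_cancel_left] at this
  rw [mul_assoc] at this
  rw [ExelMonoid.e, mul_assoc, this]

lemma e_mul_of (a h : G) : e a * of h = of h * e (h⁻¹*a) := by
  have h1 := rel_left (G := G) a⁻¹ h
  simp only [inv_inv] at h1
  have h2 := rel_right (G := G) h (h⁻¹*a)
  simp only [mul_inv_rev, inv_inv, mul_inv_cancel_left] at h2
  calc of a * of a⁻¹ * of h = of a * of (a⁻¹ * h) := h1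
    _ = of h * of (h⁻¹*a) * of (a⁻¹*h) := h2.symm
    _ = of h * (of (h⁻¹*a) * of ((h⁻¹*a)⁻¹)) := by rw [mul_assoc, mul_inv_rev, inv_inv]

lemma of_mul_e (x a : G) : of x * e a = e (x*a) * of x := by
  have := e_mul_of (x*a) x
  simp only [inv_mul_cancel_left] at this
  exact this.symm

lemma e_comm (a b : G) : e a * e b = e b * e a := by
  have h1 : e a * of b = of b * e (b⁻¹*a) := e_mul_of a b
  have h2 : of b⁻¹ * e a = e (b⁻¹*a) * of b⁻¹ := of_mul_e b⁻¹ a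
  calc e a * e b = e a * (of b * of b⁻¹) := rfl
    _ = (e a * of b) * of b⁻¹ := (mul_assoc _ _ _).symm
    _ = (of b * e (b⁻¹*a)) * of b⁻¹ := by rw [h1]
    _ = of b * (e (b⁻¹*a) * of b⁻¹) := mul_assoc _ _ _
    _ = of b * (of b⁻¹ * e a) := by rw [← h2]
    _ = (of b * of b⁻¹) * e a := (mul_assoc _ _ _).symm
    _ = e b * e a := rfl

lemma e_one : ExelMonoid.e (1:G) = 1 := by
  rw [ExelMonoid.e, inv_one, of_one, one_mul]

lemma e_idem (a : G) : e a * e a = e a := by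
  have := rel_left (G := G) a⁻¹ a
  simp only [inv_inv, inv_mul_cancel, of_one, mul_one] at this
  calc e a * e a = e a * (of a * of a⁻¹) := rfl
    _ = (e a * of a) * of a⁻¹ := (mul_assoc _ _ _).symm
    _ = of a * of a⁻¹ := by rw [show ExelMonoid.e a * of a = of a from this]
    _ = e a := rfl

end ExelAux

structure ExelModel (G : Type*) [Group G] [DecidableEq G] where
  carrier : Finset G
  pt : G
  one_mem : (1:G) ∈ carrier
  pt_mem : pt ∈ carrier

namespace ExelModel

variable {G : Type*} [Group G] [DecidableEq G]

lemma ext' {p q : ExelModel G} (h1 : p.carrier = q.carrier) (h2 : p.pt = q.pt) : p = q := by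
  cases p; cases q; simp_all

instance : Mul (ExelModel G) :=
  ⟨fun p q => ⟨p.carrier ∪ q.carrier.image (p.pt * ·), p.pt * q.pt,
    Finset.mem_union_left _ p.one_mem,
    Finset.mem_union_right _ (Finset.mem_image_of_mem _ q.pt_mem)⟩⟩

@[simp] lemma mul_carrier (p q : ExelModel G) :
    (p*q).carrier = p.carrier ∪ q.carrier.image (p.pt * ·) := rfl
@[simp] lemma mul_pt (p q : ExelModel G) : (p*q).pt = p.pt * q.pt := rfl

instance : One (ExelModel G) :=
  ⟨⟨{1}, 1, Finset.mem_singleton_self 1, Finset.mem_singleton_self 1⟩⟩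

@[simp] lemma one_carrier : (1 : ExelModel G).carrier = {1} := rfl
@[simp] lemma one_pt : (1 : ExelModel G).pt = 1 := rfl

instance : Monoid (ExelModel G) where
  mul_assoc p q r := by
    apply ext'
    · simp only [mul_carrier, mul_pt, Finset.image_union, Finset.image_image,
        Finset.union_assoc]
      congr 2
      · ext x; simp [mul_assoc]
    · simp [mul_assoc]
  one_mul p := by
    apply ext'
    · simp only [mul_carrier, one_carrier, one_pt, one_mul]
      rw [Finset.image_id']
      exact Finset.union_eq_right.mpr (Finset.singleton_subset_iff.mpr p.one_mem)
    · simp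
  mul_one p := by
    apply ext'
    · simp only [mul_carrier, one_carrier, Finset.image_singleton, mul_one]
      exact Finset.union_eq_left.mpr (Finset.singleton_subset_iff.mpr p.pt_mem)
    · simp

end ExelModel

namespace ExelAux

variable {G : Type*} [Group G] [DecidableEq G]

def genModel (g : G) : ExelModel G := ⟨{1, g}, g, by simp, by simp⟩

@[simp] lemma genModel_carrier (g : G) : (genModel g : ExelModel G).carrier = {1, g} := rfl
@[simp] lemma genModel_pt (g : G) : (genModel g : ExelModel G).pt = g := rfl

def freeToModel : FreeMonoid G →* ExelModel G := FreeMonoid.lift genModel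

@[simp] lemma freeToModel_of (g : G) : freeToModel (FreeMonoid.of g) = genModel g :=
  FreeMonoid.lift_eval_of _ _

lemma exelCon_le : ExelCon G ≤ Con.ker (freeToModel (G := G)) := by
  apply (Con.conGen_le (r := ExelRel G)).mpr
  rintro x y (_ | ⟨s, t⟩ | ⟨s, t⟩) <;> rw [Con.ker_rel]
  · rw [freeToModel_of, map_one]
    apply ExelModel.ext' <;> simp [genModel]
  · simp only [map_mul, freeToModel_of]
    apply ExelModel.ext'
    · ext x
      simp [mul_assoc]
    · simp
  · simp only [map_mul, freeToModel_of]
    apply ExelModel.ext'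
    · ext x
      simp [mul_assoc]
      tauto
    · simp

noncomputable def toModel : ExelMonoid G →* ExelModel G :=
  Con.lift _ freeToModel exelCon_le

@[simp] lemma toModel_mk' (w : FreeMonoid G) :
    toModel ((ExelCon G).mk' w) = freeToModel w :=
  Con.lift_mk' exelCon_le w

@[simp] lemma toModel_of (g : G) : toModel (ExelMonoid.of g) = genModel g := by
  rw [ExelMonoid.of, toModel_mk', freeToModel_of]

open ExelMonoid in
noncomputable def eProd (A : Finset G) : ExelMonoid G :=
  A.noncommProd (fun a => ExelMonoid.e a) (fun a _ b _ _ => e_comm a b)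

open ExelMonoid

lemma eProd_insert {A : Finset G} {a : G} (ha : a ∉ A) :
    eProd (insert a A) = ExelMonoid.e a * eProd A :=
  Finset.noncommProd_insert_of_notMem _ _ _ _ ha

lemma eProd_absorb {A : Finset G} {a : G} (ha : a ∈ A) :
    eProd A * ExelMonoid.e a = eProd A := by
  rw [eProd, ← Finset.noncommProd_erase_mul A ha (fun a => ExelMonoid.e a)
      (fun a _ b _ _ => e_comm a b), mul_assoc, e_idem]

lemma eProd_insert_one (A : Finset G) : eProd (insert 1 A) = eProd A := by
  by_cases h : (1:G) ∈ A
  · rw [Finset.insert_eq_self.mpr h]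
  · rw [eProd_insert h, e_one, one_mul]

lemma of_mul_eProd (x : G) (A : Finset G) :
    ExelMonoid.of x * eProd A = eProd (A.image (x * ·)) * ExelMonoid.of x := by
  classical
  induction A using Finset.induction_on with
  | empty =>
    simp only [Finset.image_empty, eProd, Finset.noncommProd_empty, mul_one, one_mul]
    exact (congrArg (ExelMonoid.of x * ·) (Finset.noncommProd_empty _ _)).trans (mul_one _)
  | @insert a A ha ih =>
    rw [eProd_insert ha, ← mul_assoc, of_mul_e, mul_assoc, ih, ← mul_assoc,
      Finset.image_insert, eProd_insert (by
        intro hmem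
        obtain ⟨b, hb, hb'⟩ := Finset.mem_image.mp hmem
        exact ha ((mul_right_injective x hb').symm ▸ hb : a ∈ A))]

lemma retract (w : FreeMonoid G) :
    eProd ((freeToModel (G := G) w).carrier) * ExelMonoid.of (freeToModel w).pt
      = (ExelCon G).mk' w := by
  induction w using FreeMonoid.inductionOn' with
  | one =>
    rw [map_one, map_one]
    show eProd {1} * ExelMonoid.of (1:G) = 1
    rw [of_one, mul_one]
    show ExelMonoid.e 1 = 1
    exact e_one
  | of_mul x w ih =>
    rw [map_mul, freeToModel_of]
    set p := freeToModel (G := G) w with hp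
    have hx : x ∈ p.carrier.image (x * ·) :=
      Finset.mem_image.mpr ⟨1, p.one_mem, mul_one x⟩
    have hcar : (genModel x * p).carrier = insert 1 (p.carrier.image (x * ·)) := by
      show ({1, x} : Finset G) ∪ _ = _
      simp only [genModel_pt]
      rw [Finset.insert_union, ← Finset.insert_eq, Finset.insert_eq_self.mpr hx]
    have hpt : (genModel x * p).pt = x * p.pt := by simp
    rw [hcar, hpt, eProd_insert_one, map_mul]
    calc eProd (p.carrier.image (x * ·)) * ExelMonoid.of (x * p.pt)
        = eProd (p.carrier.image (x * ·)) * (ExelMonoid.e x * ExelMonoid.of (x * p.pt)) := by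
          rw [← mul_assoc, eProd_absorb hx]
      _ = eProd (p.carrier.image (x * ·)) * (ExelMonoid.of x * ExelMonoid.of p.pt) := by
          rw [of_mul_of]
      _ = (eProd (p.carrier.image (x * ·)) * ExelMonoid.of x) * ExelMonoid.of p.pt := by
          rw [mul_assoc]
      _ = (ExelMonoid.of x * eProd p.carrier) * ExelMonoid.of p.pt := by
          rw [of_mul_eProd]
      _ = ExelMonoid.of x * (eProd p.carrier * ExelMonoid.of p.pt) := by rw [mul_assoc]
      _ = (ExelCon G).mk' (FreeMonoid.of x) * (ExelCon G).mk' w := by rw [ih]; rfl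
      _ = (ExelCon G).mk' (FreeMonoid.of x * w) := (map_mul _ _ _).symm

lemma toModel_injective : Function.Injective (toModel (G := G)) := by
  intro s t hst
  obtain ⟨w, rfl⟩ := Con.mk'_surjective s
  obtain ⟨v, rfl⟩ := Con.mk'_surjective t
  rw [toModel_mk', toModel_mk'] at hst
  rw [← retract w, ← retract v, hst]

def eModel (g : G) : ExelModel G := ⟨{1, g}, 1, by simp, by simp⟩

lemma toModel_e (g : G) : toModel (ExelMonoid.e g) = eModel g := by
  rw [ExelMonoid.e, map_mul, toModel_of, toModel_of]
  apply ExelModel.ext'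
  · ext x
    simp [eModel]
    tauto
  · simp [eModel]

lemma mul_eModel (p : ExelModel G) (g : G) :
    p * eModel g = ⟨insert (p.pt * g) p.carrier, p.pt,
      Finset.mem_insert_of_mem p.one_mem, Finset.mem_insert_of_mem p.pt_mem⟩ := by
  apply ExelModel.ext'
  · show p.carrier ∪ Finset.image (p.pt * ·) {1, g} = _
    rw [Finset.image_insert, Finset.image_singleton, mul_one]
    ext x
    simp only [Finset.mem_union, Finset.mem_insert, Finset.mem_singleton]
    constructor
    · rintro (h | rfl | h)
      exacts [Or.inr h, Or.inr p.pt_mem, Or.inl h]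
    · tauto
  · show p.pt * (1:G) = p.pt
    rw [mul_one]

lemma badPair_finite (s t : ExelMonoid G) (hst : s ≠ t) :
    {g : G | s * ExelMonoid.e g = t * ExelMonoid.e g}.Finite := by
  set p := toModel s with hps
  set q := toModel t with hqs
  apply Set.Finite.subset
    (Set.Finite.image (fun x => p.pt⁻¹ * x) (p.carrier ∪ q.carrier).finite_toSet)
  intro g hg
  have hg' : s * ExelMonoid.e g = t * ExelMonoid.e g := hg
  have hm : p * eModel g = q * eModel g := by
    have := congrArg toModel hg'
    simpa only [map_mul, toModel_e, hps, hqs] using this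
  rw [mul_eModel, mul_eModel] at hm
  have hcar : insert (p.pt * g) p.carrier = insert (q.pt * g) q.carrier :=
    congrArg ExelModel.carrier hm
  have hpt : p.pt = q.pt := by
    have h2 := congrArg ExelModel.pt hm
    dsimp only at h2
    exact h2
  have hpq : p ≠ q := fun hh => hst (toModel_injective hh)
  have hAB : p.carrier ≠ q.carrier := fun hh => hpq (ExelModel.ext' hh hpt)
  rw [← hpt] at hcar
  have hwit : ∃ x ∈ p.carrier ∪ q.carrier, x = p.pt * g := by
    rcases (not_and_or.mp (fun hh => hAB (Finset.Subset.antisymm hh.1 hh.2))) with hns | hns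
    · obtain ⟨x, hx, hx'⟩ := Finset.not_subset.mp hns
      have hxm : x ∈ insert (p.pt * g) q.carrier := hcar ▸ Finset.mem_insert_of_mem hx
      rcases Finset.mem_insert.mp hxm with he | he
      · exact ⟨x, Finset.mem_union_left _ hx, he⟩
      · exact absurd he hx'
    · obtain ⟨x, hx, hx'⟩ := Finset.not_subset.mp hns
      have hxm : x ∈ insert (p.pt * g) p.carrier := hcar.symm ▸ Finset.mem_insert_of_mem hx
      rcases Finset.mem_insert.mp hxm with he | he
      · exact ⟨x, Finset.mem_union_right _ hx, he⟩
      · exact absurd he hx'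
  obtain ⟨x, hx, hxe⟩ := hwit
  exact ⟨x, Finset.mem_coe.mpr hx, by simp [hxe]⟩

end ExelAux

/-- Let `G` be an infinite group and `z ∈ K_par G`. If there is an infinite subset
`S ⊆ G` with `z e_g = 0` for all `g ∈ S`, then `z = 0`. -/
theorem kpar_zero_of_annihilated (K : Type*) {G : Type*} [CommRing K] [Group G]
    [Infinite G] (z : KparG K G) (S : Set G) (hS : S.Infinite)
    (h : ∀ g ∈ S, z * eK K g = 0) : z = 0 := by
  classical
  have heK : ∀ g : G, eK K g = MonoidAlgebra.single (ExelMonoid.e g) (1:K) := by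
    intro g
    rw [eK, pr, pr, MonoidAlgebra.of_apply, MonoidAlgebra.of_apply,
      MonoidAlgebra.single_mul_single, one_mul, ExelMonoid.e]
  have hmul : ∀ g : G, (z * eK K g).coeff = Finsupp.mapDomain (· * ExelMonoid.e g) z.coeff := by
    intro g
    rw [heK, MonoidAlgebra.mul_def, Finsupp.mapDomain]
    simp [MonoidAlgebra.coeff_single]
  let Bad : Set G := ⋃ s ∈ (z.coeff.support : Set (ExelMonoid G)),
      ⋃ t ∈ (z.coeff.support : Set (ExelMonoid G)),
      {g : G | s ≠ t ∧ s * ExelMonoid.e g = t * ExelMonoid.e g}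
  have hBadFin : Bad.Finite := by
    apply Set.Finite.biUnion z.coeff.support.finite_toSet
    intro s _
    apply Set.Finite.biUnion z.coeff.support.finite_toSet
    intro t _
    by_cases hst : s = t
    · refine Set.Finite.subset (Set.finite_empty) ?_
      rintro g ⟨h1, -⟩
      exact (h1 hst).elim
    · exact Set.Finite.subset (ExelAux.badPair_finite s t hst) (fun g hg => hg.2)
  obtain ⟨g, hgS, hgB⟩ := (hS.diff hBadFin).nonempty
  have hinj : Set.InjOn (· * ExelMonoid.e g) ↑z.coeff.support := by
    intro s hs t ht hst
    by_contra hne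
    exact hgB (Set.mem_biUnion hs (Set.mem_biUnion ht ⟨hne, hst⟩))
  have h0 : Finsupp.mapDomain (· * ExelMonoid.e g) z.coeff = 0 := by
    rw [← hmul g, h g hgS]; rfl
  have hd := Finsupp.mapDomain_injOn (M := K) (z.coeff.support : Set (ExelMonoid G)) hinj
  rw [← MonoidAlgebra.coeff_eq_zero]
  refine hd (Set.mem_setOf.mpr subset_rfl) (by simp) ?_
  rw [h0, Finsupp.mapDomain_zero]
end
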